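/- Let n ≥ 1, let Ω ⊆ Ω' ⊆ ℝⁿ with Ω' open and bounded, and let ε, λ, μ > 0. Let f : ℝⁿ → ℝ be continuously differentiable with f = 0 outside Ω', ∫_{ℝⁿ} f² = 1, and ∫_{ℝⁿ} ‖∇f‖² ≤ λ. Let χ : ℝⁿ → ℝ be differentiable with 0 ≤ χ ≤ 1, ‖∇χ(x)‖ ≤ 1/ε for all x, and χ = 0 on Ω. If μ ∫_{ℝⁿ} (χf)² ≤ ∫_{ℝⁿ} ‖∇(χf)‖², then ∫_{ℝⁿ} χ² f² ≤ 2(1 + ε²λ)/(ε²μ). -/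

import Mathlib

open MeasureTheory
set_option maxHeartbeats 1000000

lemma grad_norm_eq {n : ℕ} (g : EuclideanSpace ℝ (Fin n) → ℝ) (x) :
    ‖gradient g x‖ = ‖fderiv ℝ g x‖ := by
  rw [gradient]; exact LinearIsometryEquiv.norm_map _ _

/-- The bound `∫ χ² f² ≤ 2(1 + ε²λ)/(ε²μ)` for the cutoff χ vanishing on Ω,
coming from the variational characterization of μ = λ₁(Ω'∖Ω̄) applied to χf. -/
theorem stmt1 (n : ℕ) (hn : 1 ≤ n)
    (Ω Ω' : Set (EuclideanSpace ℝ (Fin n)))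
    (hsub : Ω ⊆ Ω') (hopen : IsOpen Ω') (hbdd : Bornology.IsBounded Ω')
    (ε lam μ : ℝ) (hε : 0 < ε) (hlam : 0 < lam) (hμ : 0 < μ)
    (f χ : EuclideanSpace ℝ (Fin n) → ℝ)
    (hf : ContDiff ℝ 1 f) (hf0 : ∀ x ∉ Ω', f x = 0)
    (hfL2 : ∫ x, (f x) ^ 2 = 1)
    (hfD : ∫ x, ‖gradient f x‖ ^ 2 ≤ lam)
    (hχd : Differentiable ℝ χ)
    (hχ0 : ∀ x, 0 ≤ χ x) (hχ1 : ∀ x, χ x ≤ 1)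
    (hχg : ∀ x, ‖gradient χ x‖ ≤ 1 / ε)
    (hχΩ : ∀ x ∈ Ω, χ x = 0)
    (hvar : μ * ∫ x, (χ x * f x) ^ 2 ≤
      ∫ x, ‖gradient (fun y => χ y * f y) x‖ ^ 2) :
    ∫ x, (χ x) ^ 2 * (f x) ^ 2 ≤ 2 * (1 + ε ^ 2 * lam) / (ε ^ 2 * μ) := by
  -- compact support of f
  have hfc : HasCompactSupport f := by
    have hK : IsCompact (closure Ω') :=
      Metric.isCompact_of_isClosed_isBounded isClosed_closure hbdd.closure
    refine IsCompact.of_isClosed_subset hK (isClosed_tsupport f) ?_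
    refine closure_minimal ?_ isClosed_closure
    intro x hx
    by_contra hxn
    exact hx (hf0 x fun h => hxn (subset_closure h))
  -- integrability
  have hgeq : (fun x => ‖gradient f x‖ ^ 2) = fun x => ‖fderiv ℝ f x‖ ^ 2 :=
    funext fun x => by rw [grad_norm_eq]
  have hI2 : Integrable (fun x => (f x) ^ 2) := by
    have h1 : HasCompactSupport ((fun y : ℝ => y ^ 2) ∘ f) :=
      hfc.comp_left (by simp)
    have : HasCompactSupport (fun x => (f x) ^ 2) := h1
    exact (hf.continuous.pow 2).integrable_of_hasCompactSupport this
  have hcfd : Continuous (fderiv ℝ f) := hf.continuous_fderiv one_ne_zero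
  have hI1 : Integrable (fun x => ‖gradient f x‖ ^ 2) := by
    rw [hgeq]
    have hcs : HasCompactSupport (fderiv ℝ f) := hfc.fderiv (𝕜 := ℝ)
    have hcs2 : HasCompactSupport ((fun y : EuclideanSpace ℝ (Fin n) →L[ℝ] ℝ => ‖y‖ ^ 2) ∘ (fderiv ℝ f)) :=
      hcs.comp_left (by simp)
    have hcs3 : HasCompactSupport (fun x => ‖fderiv ℝ f x‖ ^ 2) := hcs2
    exact (hcfd.norm.pow 2).integrable_of_hasCompactSupport hcs3
  have hIg : Integrable (fun x => 2 * ‖gradient f x‖ ^ 2 + (2 / ε ^ 2) * (f x) ^ 2) :=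
    (hI1.const_mul 2).add (hI2.const_mul _)
  -- pointwise bound
  have hpt : ∀ x, ‖gradient (fun y => χ y * f y) x‖ ^ 2 ≤
      2 * ‖gradient f x‖ ^ 2 + (2 / ε ^ 2) * (f x) ^ 2 := by
    intro x
    have hdf : DifferentiableAt ℝ f x := (hf.differentiable one_ne_zero) x
    have hmul : fderiv ℝ (fun y => χ y * f y) x
        = χ x • fderiv ℝ f x + f x • fderiv ℝ χ x := fderiv_mul (hχd x) hdf
    have hnorm : ‖gradient (fun y => χ y * f y) x‖
        ≤ χ x * ‖fderiv ℝ f x‖ + |f x| * ‖fderiv ℝ χ x‖ := by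
      rw [grad_norm_eq, hmul]
      refine le_trans (norm_add_le _ _) ?_
      rw [norm_smul, norm_smul]
      simp [Real.norm_eq_abs, abs_of_nonneg (hχ0 x)]
    have h1 : ‖fderiv ℝ f x‖ = ‖gradient f x‖ := (grad_norm_eq f x).symm
    have h2 : ‖fderiv ℝ χ x‖ ≤ 1 / ε := by rw [← grad_norm_eq]; exact hχg x
    have hc : χ x * ‖fderiv ℝ f x‖ ≤ ‖gradient f x‖ := by
      rw [h1] at *
      nlinarith [norm_nonneg (gradient f x), hχ0 x, hχ1 x]
    have hd : |f x| * ‖fderiv ℝ χ x‖ ≤ |f x| / ε := by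
      have := abs_nonneg (f x)
      calc |f x| * ‖fderiv ℝ χ x‖ ≤ |f x| * (1 / ε) := by
            exact mul_le_mul_of_nonneg_left h2 this
        _ = |f x| / ε := by ring
    have hnn : (0:ℝ) ≤ ‖gradient (fun y => χ y * f y) x‖ := norm_nonneg _
    have hb : ‖gradient (fun y => χ y * f y) x‖ ≤ ‖gradient f x‖ + |f x| / ε :=
      le_trans hnorm (add_le_add hc hd)
    have hsq : (f x) ^ 2 = |f x| ^ 2 := (sq_abs _).symm
    rw [hsq]
    have h3 : (0:ℝ) ≤ ‖gradient f x‖ := norm_nonneg _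
    have h4 : (0:ℝ) ≤ |f x| := abs_nonneg _
    have hε2 : (0:ℝ) < ε ^ 2 := by positivity
    have hre : 2 / ε ^ 2 * |f x| ^ 2 = 2 * (|f x| / ε) ^ 2 := by
      field_simp
    rw [hre]
    have hLsq : ‖gradient (fun y => χ y * f y) x‖ ^ 2
        ≤ (‖gradient f x‖ + |f x| / ε) ^ 2 := by
      have := pow_le_pow_left₀ hnn hb 2
      simpa using this
    nlinarith [sq_nonneg (‖gradient f x‖ - |f x| / ε)]
  -- integral bound
  have hIbound : ∫ x, ‖gradient (fun y => χ y * f y) x‖ ^ 2 ≤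
      ∫ x, (2 * ‖gradient f x‖ ^ 2 + (2 / ε ^ 2) * (f x) ^ 2) := by
    refine integral_mono_of_nonneg ?_ hIg ?_
    · filter_upwards with x; positivity
    · filter_upwards with x; exact hpt x
  have hsplit : ∫ x, (2 * ‖gradient f x‖ ^ 2 + (2 / ε ^ 2) * (f x) ^ 2)
      = 2 * (∫ x, ‖gradient f x‖ ^ 2) + (2 / ε ^ 2) * ∫ x, (f x) ^ 2 := by
    rw [integral_add (hI1.const_mul 2) (hI2.const_mul _), integral_const_mul,
      integral_const_mul]
  have hchain : μ * ∫ x, (χ x * f x) ^ 2 ≤ 2 * lam + 2 / ε ^ 2 := by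
    calc μ * ∫ x, (χ x * f x) ^ 2 ≤ _ := hvar
      _ ≤ _ := hIbound
      _ = 2 * (∫ x, ‖gradient f x‖ ^ 2) + (2 / ε ^ 2) * ∫ x, (f x) ^ 2 := hsplit
      _ ≤ 2 * lam + 2 / ε ^ 2 := by
          rw [hfL2]; nlinarith [hfD]
  have heq : ∫ x, (χ x) ^ 2 * (f x) ^ 2 = ∫ x, (χ x * f x) ^ 2 := by
    congr 1; ext x; ring
  rw [heq]
  have hX : ∫ x, (χ x * f x) ^ 2 ≤ (2 * lam + 2 / ε ^ 2) / μ := by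
    rw [le_div_iff₀ hμ, mul_comm]; exact hchain
  calc ∫ x, (χ x * f x) ^ 2 ≤ (2 * lam + 2 / ε ^ 2) / μ := hX
    _ = 2 * (1 + ε ^ 2 * lam) / (ε ^ 2 * μ) := by field_simp; ring
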